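/- For integers t > q ≥ √(8(t+1)·ln(t+1)) (with t+1 ≥ 2), the binomial coefficient C(t+1+q, q) is at least e^{q²/(8(t+1))} · (t+1)^{q+1}/q!. -/

import Mathlib

open Finset in
lemma ascFactorial_cast_prod (n q : ℕ) :
    ((n.ascFactorial q : ℝ)) = ∏ i ∈ Finset.range q, ((n : ℝ) + i) := by
  induction q with
  | zero => simp [Nat.ascFactorial_zero]
  | succ k ih =>
      rw [Nat.ascFactorial_succ, Finset.prod_range_succ, Nat.cast_mul, ih]
      push_cast
      ring

lemma sum_range_add_one_cast (q : ℕ) :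
    ∑ i ∈ Finset.range q, ((i : ℝ) + 1) = (q : ℝ) * ((q : ℝ) + 1) / 2 := by
  induction q with
  | zero => simp
  | succ k ih =>
      rw [Finset.sum_range_succ, ih]
      push_cast; ring

lemma exp_half_le_one_add {y : ℝ} (h0 : 0 ≤ y) (h1 : y ≤ 1) :
    Real.exp (y / 2) ≤ 1 + y := by
  have hpos : (0 : ℝ) < 1 + y := by linarith
  rw [← Real.exp_log hpos]
  apply Real.exp_le_exp.2
  have hinvpos : (0 : ℝ) < (1 + y)⁻¹ := by positivity
  have hlog := Real.log_le_sub_one_of_pos hinvpos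
  rw [Real.log_inv] at hlog
  have hineq : y / 2 ≤ y / (1 + y) := by
    rw [div_le_div_iff₀ (by norm_num) hpos]
    nlinarith
  have : (1 + y)⁻¹ - 1 = -(y / (1 + y)) := by
    field_simp
    ring
  rw [this] at hlog
  linarith

theorem choose_ge_exp_mul (q t : ℕ) (hqt : q < t) (ht : 2 ≤ t + 1)
    (hq : Real.sqrt (8 * ((t : ℝ) + 1) * Real.log ((t : ℝ) + 1)) ≤ (q : ℝ)) :
    Real.exp ((q : ℝ) ^ 2 / (8 * ((t : ℝ) + 1))) * ((t : ℝ) + 1) ^ (q + 1) / (q.factorial : ℝ)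
      ≤ ((t + 1 + q).choose q : ℝ) := by
  set T : ℝ := (t : ℝ) + 1 with hT
  have hT2 : (2 : ℝ) ≤ T := by
    have : (1 : ℕ) ≤ t := by omega
    have : (1 : ℝ) ≤ (t : ℝ) := by exact_mod_cast this
    simp [hT]; linarith
  have hTpos : (0 : ℝ) < T := by linarith
  have hlogT : 0 ≤ Real.log T := Real.log_nonneg (by linarith)
  -- key identity
  have hkey : (q.factorial : ℝ) * ((t + 1 + q).choose q : ℝ)
      = ∏ i ∈ Finset.range q, (T + 1 + i) := by
    have h := Nat.ascFactorial_eq_factorial_mul_choose (t + 1) q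
    have := congrArg (fun n : ℕ => (n : ℝ)) h
    simp only [Nat.cast_mul] at this
    rw [← this, ascFactorial_cast_prod]
    apply Finset.prod_congr rfl
    intro i _
    push_cast
    ring
  -- q^2 ≥ 8 T log T
  have hq2 : 8 * T * Real.log T ≤ (q : ℝ) ^ 2 := by
    have h8 : 0 ≤ 8 * T * Real.log T := by positivity
    have := Real.sq_sqrt h8
    calc 8 * T * Real.log T = Real.sqrt (8 * T * Real.log T) ^ 2 := this.symm
      _ ≤ (q : ℝ) ^ 2 := by
          apply pow_le_pow_left₀ (Real.sqrt_nonneg _) hq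
  -- per-factor bound
  have hstep : ∀ i ∈ Finset.range q, T * Real.exp (((i : ℝ) + 1) / (2 * T)) ≤ T + 1 + i := by
    intro i hi
    simp only [Finset.mem_range] at hi
    set y : ℝ := ((i : ℝ) + 1) / T with hy
    have hy0 : 0 ≤ y := by positivity
    have hy1 : y ≤ 1 := by
      rw [hy, div_le_one hTpos]
      have : (i : ℝ) + 1 ≤ (q : ℝ) := by exact_mod_cast hi
      have hqT : (q : ℝ) ≤ T := by
        have : (q : ℝ) ≤ (t : ℝ) := by exact_mod_cast hqt.le
        linarith
      linarith
    have := exp_half_le_one_add hy0 hy1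
    have harg : ((i : ℝ) + 1) / (2 * T) = y / 2 := by
      rw [hy, div_div, mul_comm]
    rw [harg]
    calc T * Real.exp (y / 2) ≤ T * (1 + y) := by
          apply mul_le_mul_of_nonneg_left this hTpos.le
      _ = T + 1 + i := by rw [hy]; field_simp; ring
  -- product lower bound
  have hprod : ∏ i ∈ Finset.range q, (T * Real.exp (((i : ℝ) + 1) / (2 * T)))
      ≤ ∏ i ∈ Finset.range q, (T + 1 + i) := by
    apply Finset.prod_le_prod
    · intro i _; positivity
    · exact hstep
  have hsum : ∑ i ∈ Finset.range q, (((i : ℝ) + 1) / (2 * T))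
      = (q : ℝ) * ((q : ℝ) + 1) / (4 * T) := by
    rw [← Finset.sum_div]
    rw [sum_range_add_one_cast]
    rw [div_div]
    congr 1
    ring
  have hlhs : ∏ i ∈ Finset.range q, (T * Real.exp (((i : ℝ) + 1) / (2 * T)))
      = T ^ q * Real.exp ((q : ℝ) * ((q : ℝ) + 1) / (4 * T)) := by
    rw [Finset.prod_mul_distrib, Finset.prod_const, ← Real.exp_sum, hsum]
    simp
  -- exponent comparison
  have hexp : Real.exp ((q : ℝ) ^ 2 / (8 * T)) * T
      ≤ Real.exp ((q : ℝ) * ((q : ℝ) + 1) / (4 * T)) := by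
    have h1 : (q : ℝ) ^ 2 / (8 * T) + Real.log T ≤ (q : ℝ) * ((q : ℝ) + 1) / (4 * T) := by
      have hlog' : Real.log T ≤ (q : ℝ) ^ 2 / (8 * T) := by
        rw [le_div_iff₀ (by positivity)]
        nlinarith
      have hqnn : (0 : ℝ) ≤ (q : ℝ) := Nat.cast_nonneg q
      have : (q : ℝ) ^ 2 / (8 * T) + (q : ℝ) ^ 2 / (8 * T) ≤ (q : ℝ) * ((q : ℝ) + 1) / (4 * T) := by
        rw [← add_div, div_le_div_iff₀ (by positivity) (by positivity)]
        nlinarith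
      linarith
    calc Real.exp ((q : ℝ) ^ 2 / (8 * T)) * T
        = Real.exp ((q : ℝ) ^ 2 / (8 * T) + Real.log T) := by
          rw [Real.exp_add, Real.exp_log hTpos]
      _ ≤ _ := Real.exp_le_exp.2 h1
  -- assemble
  have hfac : (0 : ℝ) < (q.factorial : ℝ) := by exact_mod_cast q.factorial_pos
  rw [div_le_iff₀ hfac]
  have : Real.exp ((q : ℝ) ^ 2 / (8 * T)) * T ^ (q + 1)
      ≤ ∏ i ∈ Finset.range q, (T + 1 + i) := by
    calc Real.exp ((q : ℝ) ^ 2 / (8 * T)) * T ^ (q + 1)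
        = T ^ q * (Real.exp ((q : ℝ) ^ 2 / (8 * T)) * T) := by ring
      _ ≤ T ^ q * Real.exp ((q : ℝ) * ((q : ℝ) + 1) / (4 * T)) := by
          apply mul_le_mul_of_nonneg_left hexp (by positivity)
      _ = ∏ i ∈ Finset.range q, (T * Real.exp (((i : ℝ) + 1) / (2 * T))) := hlhs.symm
      _ ≤ _ := hprod
  calc Real.exp ((q : ℝ) ^ 2 / (8 * T)) * T ^ (q + 1)
      ≤ ∏ i ∈ Finset.range q, (T + 1 + i) := this
    _ = (q.factorial : ℝ) * ((t + 1 + q).choose q : ℝ) := hkey.symm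
    _ = ((t + 1 + q).choose q : ℝ) * (q.factorial : ℝ) := by ring
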